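/- arXiv:0811.2428 — 2 statements merged into one kernel-verified Lean document; each statement's English description precedes it below -/
import Mathlib

section
/- Let n ≥ 1 and T > 0. For s ∈ {−1,1}ⁿ let Rⁿ_s = {ξ ∈ ℝⁿ : sign(ξᵢ) = sᵢ, i = 1,…,n}. Let h : ℝ × ℝⁿ × [0,1] → ℝⁿ be continuous and suppose there exist 2ⁿ continuously differentiable functions h_s : ℝ × ℝⁿ × [0,1] → ℝⁿ, s ∈ {−1,1}ⁿ, such that h(t, ξ, ε) = h_s(t, ξ, ε) whenever ξ lies in the closure of Rⁿ_s. Let D : ℝ × ℝⁿ × [0,1] → ℝⁿ be continuous, continuously differentiable with respect to its second argument with jointly continuous derivative D'_v. Let v₀ ∈ ℝⁿ and assume that the function t ↦ D₁(t, v₀, 0)·D₂(t, v₀, 0)·…·D_n(t, v₀, 0) has only finitely many zeros on [0, T]. Then the function f(t, v, ε) = h(t, D(t, v, ε), ε) is integrally differentiable at v₀: for every γ > 0 there exist δ > 0 and a set M ⊂ [0, T] of Lebesgue measure at most γ such that for all v with ‖v − v₀‖ < δ, all t ∈ [0, T] \ M and all ε ∈ [0, δ], the map f(t, ·, ε) is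 differentiable at v and ‖f'_v(t, v, ε) − f'_v(t, v₀, 0)‖ ≤ γ. -/
open Set MeasureTheory

/-- The open orthant of `ℝⁿ` determined by a sign vector `s ∈ {−1,1}ⁿ`:
`Rⁿ_s = {ξ : sign (ξ i) = s i for all i}`. -/
def orthant (n : ℕ) (s : Fin n → ℝ) : Set (Fin n → ℝ) :=
  {ξ | ∀ i, 0 < s i * ξ i}

open Metric
open scoped ENNReal

lemma isOpen_orthant (n : ℕ) (s : Fin n → ℝ) : IsOpen (orthant n s) := by
  have : orthant n s = ⋂ i, {ξ : Fin n → ℝ | 0 < s i * ξ i} := by ext; simp [orthant]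
  rw [this]
  exact isOpen_iInter_of_finite fun i =>
    isOpen_lt continuous_const (continuous_const.mul (continuous_apply i))

noncomputable def inclL (n : ℕ) : (Fin n → ℝ) →L[ℝ] ℝ × (Fin n → ℝ) × ℝ :=
  (0 : (Fin n → ℝ) →L[ℝ] ℝ).prod ((ContinuousLinearMap.id ℝ (Fin n → ℝ)).prod 0)

lemma hasFDerivAt_inclL (n : ℕ) (t ε : ℝ) (ξ₀ : Fin n → ℝ) :
    HasFDerivAt (fun ξ : Fin n → ℝ => (t, ξ, ε)) (inclL n) ξ₀ :=
  HasFDerivAt.prodMk (hasFDerivAt_const t ξ₀) (HasFDerivAt.prodMk (hasFDerivAt_id ξ₀) (hasFDerivAt_const ε ξ₀))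

def sgn (n : ℕ) (b : Fin n → Bool) : Fin n → ℝ := fun i => if b i then 1 else -1

lemma sgn_prop (n : ℕ) (b : Fin n → Bool) : ∀ i, sgn n b i = 1 ∨ sgn n b i = -1 := by
  intro i; unfold sgn; split <;> simp

set_option maxHeartbeats 1000000 in
/-- a composition `f(t,v,ε) = h(t, D(t,v,ε), ε)` of a piecewise-`C¹`
function `h` (of class `C¹` on the closure of each orthant) with a `C¹` inner function
`D` is integrally differentiable at `v₀`, provided the product
`D₁(·,v₀,0)·…·D_n(·,v₀,0)` has only finitely many zeros on `[0,T]`. -/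
theorem stmt7 (n : ℕ) (hn : 1 ≤ n) (T : ℝ) (hT : 0 < T)
    (h : ℝ → (Fin n → ℝ) → ℝ → (Fin n → ℝ))
    (hcont : ContinuousOn (fun p : ℝ × (Fin n → ℝ) × ℝ => h p.1 p.2.1 p.2.2)
      {p : ℝ × (Fin n → ℝ) × ℝ | p.2.2 ∈ Icc (0:ℝ) 1})
    (hs : (Fin n → ℝ) → ℝ → (Fin n → ℝ) → ℝ → (Fin n → ℝ))
    (hs_smooth : ∀ s : Fin n → ℝ, (∀ i, s i = 1 ∨ s i = -1) →
      ContDiff ℝ 1 (fun p : ℝ × (Fin n → ℝ) × ℝ => hs s p.1 p.2.1 p.2.2))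
    (hs_eq : ∀ s : Fin n → ℝ, (∀ i, s i = 1 ∨ s i = -1) →
      ∀ (t : ℝ) (ξ : Fin n → ℝ) (ε : ℝ), ε ∈ Icc (0:ℝ) 1 →
        ξ ∈ closure (orthant n s) → h t ξ ε = hs s t ξ ε)
    (D : ℝ → (Fin n → ℝ) → ℝ → (Fin n → ℝ))
    (Dcont : ContinuousOn (fun p : ℝ × (Fin n → ℝ) × ℝ => D p.1 p.2.1 p.2.2)
      {p : ℝ × (Fin n → ℝ) × ℝ | p.2.2 ∈ Icc (0:ℝ) 1})
    (Dv : ℝ → (Fin n → ℝ) → ℝ → ((Fin n → ℝ) →L[ℝ] (Fin n → ℝ)))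
    (hDv : ∀ (t : ℝ) (v : Fin n → ℝ) (ε : ℝ), ε ∈ Icc (0:ℝ) 1 →
      HasFDerivAt (fun w => D t w ε) (Dv t v ε) v)
    (Dv_cont : ContinuousOn (fun p : ℝ × (Fin n → ℝ) × ℝ => Dv p.1 p.2.1 p.2.2)
      {p : ℝ × (Fin n → ℝ) × ℝ | p.2.2 ∈ Icc (0:ℝ) 1})
    (v₀ : Fin n → ℝ)
    (hfin : {t ∈ Icc (0:ℝ) T | ∏ i, D t v₀ 0 i = 0}.Finite) :
    ∀ γ > (0:ℝ), ∃ δ > (0:ℝ), ∃ M : Set ℝ, M ⊆ Icc (0:ℝ) T ∧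
      volume M ≤ ENNReal.ofReal γ ∧
      ∀ v : Fin n → ℝ, ‖v - v₀‖ < δ → ∀ t ∈ Icc (0:ℝ) T \ M, ∀ ε ∈ Icc (0:ℝ) δ,
        DifferentiableAt ℝ (fun w => h t (D t w ε) ε) v ∧
        ‖fderiv ℝ (fun w => h t (D t w ε) ε) v -
            fderiv ℝ (fun w => h t (D t w 0) 0) v₀‖ ≤ γ := by
  intro γ hγ
  haveI : Nonempty (Fin n) := ⟨⟨0, hn⟩⟩
  classical
  obtain ⟨Z, hZmem⟩ : ∃ Z : Finset ℝ, ∀ t ∈ Icc (0:ℝ) T, (∏ i, D t v₀ 0 i) = 0 → t ∈ Z :=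
    ⟨hfin.toFinset, fun t ht hp => hfin.mem_toFinset.2 ⟨ht, hp⟩⟩
  obtain ⟨r, hr, hrbound⟩ : ∃ r > 0, (Z.card : ℝ≥0∞) * ENNReal.ofReal (2 * r) ≤ ENNReal.ofReal γ := by
    refine ⟨γ / (2 * (Z.card + 1)), by positivity, ?_⟩
    generalize Z.card = c
    rw [← ENNReal.ofReal_natCast, ← ENNReal.ofReal_mul (Nat.cast_nonneg _)]
    apply ENNReal.ofReal_le_ofReal
    have hc1 : (0:ℝ) < (c:ℝ) + 1 := by positivity
    have h2 : (c:ℝ) * (2 * (γ / (2 * ((c:ℝ)+1)))) = γ * ((c:ℝ)/((c:ℝ)+1)) := by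
      field_simp
    rw [h2]
    calc γ * ((c:ℝ)/((c:ℝ)+1)) ≤ γ * 1 :=
          mul_le_mul_of_nonneg_left ((div_le_one hc1).2 (by linarith)) hγ.le
      _ = γ := mul_one γ
  set U : Set ℝ := ⋃ z ∈ Z, ball z r with hUdef
  have hUopen : IsOpen U := isOpen_biUnion fun _ _ => isOpen_ball
  set K : Set ℝ := Icc 0 T \ U with hKdef
  have hK : IsCompact K := isCompact_Icc.diff hUopen
  have hprod : ∀ t ∈ K, ∀ i, D t v₀ 0 i ≠ 0 := by
    intro t htK i hzero
    have hmem : t ∈ Z := hZmem t htK.1 (Finset.prod_eq_zero (Finset.mem_univ i) hzero)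
    exact htK.2 (Set.mem_biUnion hmem (mem_ball_self hr))
  have hρex : ∃ ρ > 0, ∀ t ∈ K, ∀ i, ρ ≤ |D t v₀ 0 i| := by
    rcases K.eq_empty_or_nonempty with hKe | hKne
    · exact ⟨1, one_pos, by simp [hKe]⟩
    · have hDK : ContinuousOn (fun t => D t v₀ 0) K := by
        have hc : ContinuousOn (fun t : ℝ => ((t, v₀, 0) : ℝ × (Fin n → ℝ) × ℝ)) K :=
          (continuous_id.prodMk continuous_const).continuousOn
        exact Dcont.comp hc (fun t _ => ⟨le_refl 0, zero_le_one⟩)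
      have hmins : ∀ i : Fin n, ∃ ρi > 0, ∀ t ∈ K, ρi ≤ |D t v₀ 0 i| := by
        intro i
        have hci : ContinuousOn (fun t => |D t v₀ 0 i|) K :=
          ((continuous_apply i).comp_continuousOn hDK).abs
        obtain ⟨t0, ht0, hmin⟩ := hK.exists_isMinOn hKne hci
        exact ⟨|D t0 v₀ 0 i|, abs_pos.2 (hprod t0 ht0 i), fun t ht => hmin ht⟩
      choose ρf hρf0 hρfK using hmins
      refine ⟨Finset.univ.inf' Finset.univ_nonempty ρf, ?_, ?_⟩
      · exact (Finset.lt_inf'_iff _).2 fun i _ => hρf0 i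
      · intro t ht i
        exact le_trans (Finset.inf'_le ρf (Finset.mem_univ i)) (hρfK i t ht)
  obtain ⟨ρ, hρ0, hρK⟩ := hρex
  set C : Set (ℝ × (Fin n → ℝ) × ℝ) := Icc 0 T ×ˢ (closedBall v₀ 1 ×ˢ Icc 0 1) with hCdef
  have hCcomp : IsCompact C :=
    isCompact_Icc.prod ((isCompact_closedBall _ _).prod isCompact_Icc)
  have hCsub : C ⊆ {p : ℝ × (Fin n → ℝ) × ℝ | p.2.2 ∈ Icc (0:ℝ) 1} := fun p hp => hp.2.2
  obtain ⟨δa, hδa0, hδa⟩ := Metric.uniformContinuousOn_iff.1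
    (hCcomp.uniformContinuousOn_of_continuous (Dcont.mono hCsub)) ρ hρ0
  set G : (Fin n → Bool) → ℝ × (Fin n → ℝ) × ℝ → ((Fin n → ℝ) →L[ℝ] (Fin n → ℝ)) :=
    fun b p =>
      ((fderiv ℝ (fun q : ℝ × (Fin n → ℝ) × ℝ => hs (sgn n b) q.1 q.2.1 q.2.2)
          (p.1, D p.1 p.2.1 p.2.2, p.2.2)).comp (inclL n)).comp (Dv p.1 p.2.1 p.2.2)
    with hGdef
  have hGcont : ∀ b, ContinuousOn (G b) {p : ℝ × (Fin n → ℝ) × ℝ | p.2.2 ∈ Icc (0:ℝ) 1} := by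
    intro b
    have h1 : ContinuousOn (fun p : ℝ × (Fin n → ℝ) × ℝ =>
        ((p.1, D p.1 p.2.1 p.2.2, p.2.2) : ℝ × (Fin n → ℝ) × ℝ))
        {p : ℝ × (Fin n → ℝ) × ℝ | p.2.2 ∈ Icc (0:ℝ) 1} :=
      ContinuousOn.prodMk (continuous_fst.continuousOn)
        (ContinuousOn.prodMk Dcont (continuous_snd.snd.continuousOn))
    have h2 : Continuous
        (fderiv ℝ (fun q : ℝ × (Fin n → ℝ) × ℝ => hs (sgn n b) q.1 q.2.1 q.2.2)) :=
      (hs_smooth (sgn n b) (sgn_prop n b)).continuous_fderiv one_ne_zero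
    exact ((h2.comp_continuousOn h1).clm_comp continuousOn_const).clm_comp Dv_cont
  have hGb : ∀ b : Fin n → Bool, ∃ δb > 0, ∀ p ∈ C, ∀ q ∈ C,
      dist p q < δb → dist (G b p) (G b q) < γ := by
    intro b
    obtain ⟨d, hd0, hd⟩ := Metric.uniformContinuousOn_iff.1
      (hCcomp.uniformContinuousOn_of_continuous ((hGcont b).mono hCsub)) γ hγ
    exact ⟨d, hd0, hd⟩
  choose δG hδG0 hδG using hGb
  set δb : ℝ := Finset.univ.inf' Finset.univ_nonempty δG with hδbdef
  have hδb0 : 0 < δb := (Finset.lt_inf'_iff _).2 fun b _ => hδG0 b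
  set δ : ℝ := min 1 (min (δa / 2) (δb / 2)) with hδdef
  have hδ0 : 0 < δ := lt_min one_pos (lt_min (by positivity) (by positivity))
  have hδ1 : δ ≤ 1 := min_le_left _ _
  have hδa2 : δ ≤ δa / 2 := le_trans (min_le_right _ _) (min_le_left _ _)
  have hδb2 : δ ≤ δb / 2 := le_trans (min_le_right _ _) (min_le_right _ _)
  set M : Set ℝ := U ∩ Icc 0 T with hMdef
  have hMsub : M ⊆ Icc (0:ℝ) T := inter_subset_right
  have hMvol : volume M ≤ ENNReal.ofReal γ := by
    calc volume M ≤ volume U := measure_mono inter_subset_left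
      _ ≤ ∑ z ∈ Z, volume (ball z r) := measure_biUnion_finset_le Z _
      _ = (Z.card : ℝ≥0∞) * ENNReal.ofReal (2 * r) := by
          simp [Finset.sum_const, nsmul_eq_mul, Real.volume_ball]
      _ ≤ ENNReal.ofReal γ := hrbound
  have hdiffK : Icc (0:ℝ) T \ M = K := by
    rw [hMdef, hKdef]; ext x
    simp only [mem_diff, mem_inter_iff, not_and]
    tauto
  refine ⟨δ, hδ0, M, hMsub, hMvol, ?_⟩
  intro v hv t ht ε hε
  have htK : t ∈ K := by rw [← hdiffK]; exact ht
  have htI : t ∈ Icc (0:ℝ) T := ht.1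
  set b : Fin n → Bool := fun i => decide (0 < D t v₀ 0 i) with hbdef
  have hsprop := sgn_prop n b
  have hdistle : ∀ (w : Fin n → ℝ) (e : ℝ), ‖w - v₀‖ < δ → e ∈ Icc (0:ℝ) δ →
      dist ((t, w, e) : ℝ × (Fin n → ℝ) × ℝ) ((t, v₀, 0) : ℝ × (Fin n → ℝ) × ℝ) ≤ δ := by
    intro w e hw he
    rw [Prod.dist_eq, Prod.dist_eq]
    apply max_le (by simp [hδ0.le])
    apply max_le
    · rw [dist_eq_norm]; exact hw.le
    · rw [Real.dist_eq, sub_zero, abs_of_nonneg he.1]; exact he.2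
  have hv0C : ((t, v₀, 0) : ℝ × (Fin n → ℝ) × ℝ) ∈ C := by
    exact ⟨htI, by simp, by constructor <;> norm_num⟩
  have key : ∀ (w : Fin n → ℝ), ‖w - v₀‖ < δ → ∀ e ∈ Icc (0:ℝ) δ,
      HasFDerivAt (fun x => h t (D t x e) e) (G b (t, w, e)) w ∧
      ((t, w, e) : ℝ × (Fin n → ℝ) × ℝ) ∈ C := by
    intro w hw e he
    have he1 : e ∈ Icc (0:ℝ) 1 := ⟨he.1, he.2.trans hδ1⟩
    have hwC : ((t, w, e) : ℝ × (Fin n → ℝ) × ℝ) ∈ C := by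
      refine ⟨htI, ?_, he1⟩
      rw [mem_closedBall, dist_eq_norm]
      exact (hw.trans_le hδ1).le
    have hdd : dist ((t, w, e) : ℝ × (Fin n → ℝ) × ℝ) ((t, v₀, 0) : ℝ × (Fin n → ℝ) × ℝ) < δa :=
      lt_of_le_of_lt (hdistle w e hw he) (by linarith)
    have hDclose : dist (D t w e) (D t v₀ 0) < ρ := hδa _ hwC _ hv0C hdd
    have horth : D t w e ∈ orthant n (sgn n b) := by
      intro i
      have hle : |D t w e i - D t v₀ 0 i| ≤ dist (D t w e) (D t v₀ 0) := by
        rw [dist_eq_norm]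
        calc |D t w e i - D t v₀ 0 i| = ‖(D t w e - D t v₀ 0) i‖ := by
              simp [Real.norm_eq_abs]
          _ ≤ ‖D t w e - D t v₀ 0‖ := norm_le_pi_norm _ i
      have hρi := hρK t htK i
      have habs := abs_lt.1 (lt_of_le_of_lt hle hDclose)
      by_cases hpos : 0 < D t v₀ 0 i
      · have hsi : sgn n b i = 1 := by simp [sgn, hbdef, hpos]
        rw [hsi, one_mul]
        have hd : |D t v₀ 0 i| = D t v₀ 0 i := abs_of_pos hpos
        linarith
      · have hneg : D t v₀ 0 i < 0 :=
          lt_of_le_of_ne (not_lt.1 hpos) (hprod t htK i)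
        have hsi : sgn n b i = -1 := by simp [sgn, hbdef, hpos]
        rw [hsi, neg_one_mul, neg_pos]
        have hd : |D t v₀ 0 i| = -(D t v₀ 0 i) := abs_of_neg hneg
        linarith
    have hHs : HasFDerivAt (fun q : ℝ × (Fin n → ℝ) × ℝ => hs (sgn n b) q.1 q.2.1 q.2.2)
        (fderiv ℝ (fun q : ℝ × (Fin n → ℝ) × ℝ => hs (sgn n b) q.1 q.2.1 q.2.2)
          (t, D t w e, e)) (t, D t w e, e) :=
      (((hs_smooth (sgn n b) hsprop).differentiable one_ne_zero) (t, D t w e, e)).hasFDerivAt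
    have hι := hasFDerivAt_inclL n t e (D t w e)
    have houter := hHs.comp (D t w e) hι
    have hinner := hDv t w e he1
    have hcomp := houter.comp w hinner
    have hO : (fun x => D t x e) ⁻¹' orthant n (sgn n b) ∈ nhds w :=
      (hDv t w e he1).continuousAt.preimage_mem_nhds
        ((isOpen_orthant n (sgn n b)).mem_nhds horth)
    have heq : (fun x => h t (D t x e) e) =ᶠ[nhds w]
        ((fun q : ℝ × (Fin n → ℝ) × ℝ => hs (sgn n b) q.1 q.2.1 q.2.2) ∘
          ((fun ξ : Fin n → ℝ => ((t, ξ, e) : ℝ × (Fin n → ℝ) × ℝ)) ∘ (fun x => D t x e))) := by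
      filter_upwards [hO] with x hx
      exact hs_eq (sgn n b) hsprop t (D t x e) e he1 (subset_closure hx)
    exact ⟨(hcomp.congr_of_eventuallyEq heq), hwC⟩
  obtain ⟨h1, hC1⟩ := key v hv ε hε
  obtain ⟨h2, hC2⟩ := key v₀ (by simpa using hδ0) 0 ⟨le_refl 0, hδ0.le⟩
  refine ⟨h1.differentiableAt, ?_⟩
  rw [h1.fderiv, h2.fderiv]
  have hdd : dist ((t, v, ε) : ℝ × (Fin n → ℝ) × ℝ) ((t, v₀, 0) : ℝ × (Fin n → ℝ) × ℝ)
      < δG b := by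
    have h5 : δb ≤ δG b := Finset.inf'_le δG (Finset.mem_univ b)
    exact lt_of_le_of_lt (hdistle v ε hv hε) (by linarith)
  have hfinal := hδG b _ hC1 _ hC2 hdd
  rw [dist_eq_norm] at hfinal
  exact hfinal.le
end

section
/- Let m₁, m₂, k̄₀ > 0 and let l ≥ 2 be an integer with (1 − l²)² ≥ 4l²·m₁/m₂. Define k̄₂ = k̄₀·(m₂/m₁)·(1/(4l²))·((1 + l²) − √((1 − l²)² − 4l²·m₁/m₂))². Then k̄₂ > 0 and, with ω₁ ≤ ω₂ the natural frequencies of the screen defined as the square roots of the two roots of z² − (k̄₀/m₁ + (k̄₀ + k̄₂)/m₂)·z + k̄₀k̄₂/(m₁m₂) = 0, one has ω₂ = l·ω₁. In particular, for l = 2, m₁ = 11, m₂ = 64 this gives k̄₂ = (25/11)·k̄₀. -/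
open Real

set_option maxHeartbeats 1000000 in
/-- the stiffness
`k̄₂ = k̄₀ (m₂/m₁) (1/(4l²)) ((1+l²) − √((1−l²)² − 4l²m₁/m₂))²` is positive and
produces the resonance `ω₂ = l·ω₁` between the natural frequencies of the screen;
for `l = 2, m₁ = 11, m₂ = 64` it equals `(25/11)k̄₀`. -/
theorem stmt11 (m₁ m₂ k₀ : ℝ) (hm₁ : 0 < m₁) (hm₂ : 0 < m₂) (hk₀ : 0 < k₀)
    (l : ℕ) (hl : 2 ≤ l)
    (hdisc : 4 * (l : ℝ) ^ 2 * m₁ / m₂ ≤ (1 - (l : ℝ) ^ 2) ^ 2)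
    (k₂ : ℝ)
    (hk₂def : k₂ = k₀ * (m₂ / m₁) * (1 / (4 * (l : ℝ) ^ 2)) *
      ((1 + (l : ℝ) ^ 2) -
        Real.sqrt ((1 - (l : ℝ) ^ 2) ^ 2 - 4 * (l : ℝ) ^ 2 * m₁ / m₂)) ^ 2) :
    0 < k₂ ∧
    (∀ ω₁ ω₂ : ℝ, 0 < ω₁ → 0 < ω₂ →
      ω₁ ^ 2 = (1/2) * (k₀ / m₁ + (k₀ + k₂) / m₂) -
        (1/2) * Real.sqrt (((k₀ + k₂) / m₂ - k₀ / m₁) ^ 2 + 4 * k₀ ^ 2 / (m₁ * m₂)) →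
      ω₂ ^ 2 = (1/2) * (k₀ / m₁ + (k₀ + k₂) / m₂) +
        (1/2) * Real.sqrt (((k₀ + k₂) / m₂ - k₀ / m₁) ^ 2 + 4 * k₀ ^ 2 / (m₁ * m₂)) →
      ω₂ = (l : ℝ) * ω₁) ∧
    (l = 2 → m₁ = 11 → m₂ = 64 → k₂ = (25 / 11) * k₀) := by
  have hl2 : (2 : ℝ) ≤ (l : ℝ) := by exact_mod_cast hl
  refine ⟨?_, ?_, ?_⟩
  · -- positivity of k₂
    set L : ℝ := (l : ℝ) ^ 2 with hLdef
    have hL4 : (4 : ℝ) ≤ L := by nlinarith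
    have hS0 : 0 ≤ Real.sqrt ((1 - L) ^ 2 - 4 * L * m₁ / m₂) := Real.sqrt_nonneg _
    have hS2 : Real.sqrt ((1 - L) ^ 2 - 4 * L * m₁ / m₂) ^ 2
        = (1 - L) ^ 2 - 4 * L * m₁ / m₂ := Real.sq_sqrt (by linarith)
    have h4pos : 0 < 4 * L * m₁ / m₂ := by positivity
    have ht : 0 < (1 + L) - Real.sqrt ((1 - L) ^ 2 - 4 * L * m₁ / m₂) := by
      nlinarith [hS0, hS2, h4pos, hL4]
    rw [hk₂def]
    have h1 : (0:ℝ) < k₀ * (m₂ / m₁) * (1 / (4 * L)) := by positivity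
    exact mul_pos h1 (pow_pos ht 2)
  · -- resonance
    intro ω₁ ω₂ hw1 hw2 e1 e2
    set L : ℝ := (l : ℝ) ^ 2 with hLdef
    have hL4 : (4 : ℝ) ≤ L := by nlinarith
    set S : ℝ := Real.sqrt ((1 - L) ^ 2 - 4 * L * m₁ / m₂) with hSdef
    have hS0 : 0 ≤ S := Real.sqrt_nonneg _
    have hS2 : S ^ 2 = (1 - L) ^ 2 - 4 * L * m₁ / m₂ := Real.sq_sqrt (by linarith)
    have h4pos : 0 < 4 * L * m₁ / m₂ := by positivity
    have ht : 0 < (1 + L) - S := by nlinarith [hS0, hS2, h4pos, hL4]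
    have hm₁' : m₁ ≠ 0 := ne_of_gt hm₁
    have hm₂' : m₂ ≠ 0 := ne_of_gt hm₂
    have hL0 : L ≠ 0 := by positivity
    have hS2' : m₂ * S ^ 2 = m₂ * (1 - L) ^ 2 - 4 * L * m₁ := by
      field_simp at hS2; linarith
    have hk₂' : 4 * L * m₁ * k₂ = k₀ * m₂ * (1 + L - S) ^ 2 := by
      rw [hk₂def]; field_simp
    have hab' : 2 * L * (m₂ * k₀ + m₁ * (k₀ + k₂)) = (1 + L) * k₀ * (1 + L - S) * m₂ := by
      linear_combination (1/2) * hk₂' + (k₀/2) * hS2'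
    have hab : k₀ / m₁ + (k₀ + k₂) / m₂ = (1 + L) * k₀ * (1 + L - S) / (2 * L * m₁) := by
      rw [div_add_div _ _ hm₁' hm₂', div_eq_div_iff (by positivity) (by positivity)]
      linear_combination m₁ * hab'
    have hDY' : 4*L^2*(m₁*(k₀+k₂) - m₂*k₀)^2 + 16*L^2*m₁*m₂*k₀^2
        = (L-1)^2*k₀^2*(1+L-S)^2*m₂^2 := by
      linear_combination (2*L*(m₂*k₀ + m₁*(k₀+k₂)) + (1+L)*k₀*(1+L-S)*m₂) * hab'
        - (4*L*m₂*k₀) * hk₂'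
    have hY0 : 0 ≤ (L - 1) * k₀ * ((1 + L) - S) / (2 * L * m₁) := by
      apply div_nonneg
      · exact mul_nonneg (mul_nonneg (by linarith) hk₀.le) ht.le
      · positivity
    have hDY : ((k₀ + k₂) / m₂ - k₀ / m₁) ^ 2 + 4 * k₀ ^ 2 / (m₁ * m₂)
        = ((L - 1) * k₀ * ((1 + L) - S) / (2 * L * m₁)) ^ 2 := by
      field_simp
      linear_combination hDY'
    have hsq : Real.sqrt (((k₀ + k₂) / m₂ - k₀ / m₁) ^ 2 + 4 * k₀ ^ 2 / (m₁ * m₂))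
        = (L - 1) * k₀ * ((1 + L) - S) / (2 * L * m₁) := by
      rw [hDY, Real.sqrt_sq hY0]
    rw [hsq] at e1 e2
    have hsq2 : ω₂ ^ 2 = ((l : ℝ) * ω₁) ^ 2 := by
      have hLw : ω₂ ^ 2 = L * ω₁ ^ 2 := by
        rw [e1, e2]; linear_combination ((1 - L) / 2) * hab
      rw [hLw, hLdef]; ring
    have hpos : 0 < (l : ℝ) * ω₁ := mul_pos (by linarith) hw1
    calc ω₂ = Real.sqrt (ω₂ ^ 2) := (Real.sqrt_sq hw2.le).symm
      _ = Real.sqrt (((l : ℝ) * ω₁) ^ 2) := by rw [hsq2]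
      _ = (l : ℝ) * ω₁ := Real.sqrt_sq hpos.le
  · -- numerical case
    rintro rfl rfl rfl
    rw [hk₂def]
    have hc : ((1 : ℝ) - ((2:ℕ) : ℝ) ^ 2) ^ 2 - 4 * ((2:ℕ) : ℝ) ^ 2 * 11 / 64
        = (5 / 2 : ℝ) ^ 2 := by norm_num
    rw [hc, Real.sqrt_sq (by norm_num)]
    norm_num
    ring
end
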